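/- Suppose (a,k) and (a',k') both lie in G_ℝ^+ and both a and a' admit lifts to ℝ^n whose coordinates are weakly decreasing (i.e. they lie in Λ_ℝ^+). If (a,k) and (a',k') are conjugate in G_ℝ, then a = a' and k' = p k p^{-1} for some permutation p ∈ Per(n) with p·a = a. -/

import Mathlib

noncomputable section

open Equiv

def diagR (n : ℕ) : Submodule ℝ (Fin n → ℝ) := Submodule.span ℝ {(fun _ => 1 : Fin n → ℝ)}

abbrev LambdaR (n : ℕ) := (Fin n → ℝ) ⧸ diagR n

def permLinR (n : ℕ) (p : Equiv.Perm (Fin n)) : (Fin n → ℝ) ≃ₗ[ℝ] (Fin n → ℝ) :=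
  LinearEquiv.funCongrLeft ℝ ℝ p.symm

lemma diagR_map (n : ℕ) (p : Equiv.Perm (Fin n)) :
    Submodule.map (permLinR n p : (Fin n → ℝ) →ₗ[ℝ] (Fin n → ℝ)) (diagR n) = diagR n := by
  rw [diagR, Submodule.map_span, Set.image_singleton]
  rfl

def permQR (n : ℕ) (p : Equiv.Perm (Fin n)) : LambdaR n ≃ₗ[ℝ] LambdaR n :=
  Submodule.Quotient.equiv (diagR n) (diagR n) (permLinR n p) (diagR_map n p)

lemma permQR_mk (n : ℕ) (p : Equiv.Perm (Fin n)) (x : Fin n → ℝ) :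
    permQR n p (Submodule.Quotient.mk x) = Submodule.Quotient.mk (fun i => x (p.symm i)) := rfl

def phiR (n : ℕ) : Equiv.Perm (Fin n) →* MulAut (Multiplicative (LambdaR n)) where
  toFun p := AddEquiv.toMultiplicative (permQR n p).toAddEquiv
  map_one' := by
    ext x
    obtain ⟨y, rfl⟩ := Submodule.Quotient.mk_surjective _ (x.toAdd)
    rfl
  map_mul' p q := by
    ext x
    obtain ⟨y, rfl⟩ := Submodule.Quotient.mk_surjective _ (x.toAdd)
    rfl

abbrev GR (n : ℕ) := Multiplicative (LambdaR n) ⋊[phiR n] Equiv.Perm (Fin n)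

/-- `G_ℝ^+`: the set of `(v,p)` with `p·v = v`. -/
def GRplus (n : ℕ) : Set (GR n) := {g | phiR n g.right g.left = g.left}

/-- `Λ_ℝ^+`: classes admitting a weakly decreasing representative. -/
def LambdaRplus (n : ℕ) : Set (LambdaR n) :=
  {v | ∃ x : Fin n → ℝ, Antitone x ∧ Submodule.Quotient.mk x = v}

/-- Uniqueness of antitone permutations of a tuple. -/
lemma antitone_unique {n : ℕ} {x : Fin n → ℝ} {σ : Equiv.Perm (Fin n)}
    (h1 : Antitone (x ∘ σ)) (h2 : Antitone x) : x ∘ σ = x := by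
  have key : (fun i => -x i) ∘ σ = (fun i => -x i) ∘ (1 : Equiv.Perm (Fin n)) := by
    apply Tuple.unique_monotone
    · intro i j hij
      simpa using h1 hij
    · intro i j hij
      simpa using h2 hij
  funext i
  have := congrFun key i
  simp only [Function.comp_apply, Equiv.Perm.coe_one, id_eq, neg_inj] at this
  exact this

theorem conj_in_GRplus (n : ℕ) (hn : 2 ≤ n) (g g' : GR n)
    (hg : g ∈ GRplus n) (hg' : g' ∈ GRplus n)
    (ha : g.left.toAdd ∈ LambdaRplus n) (ha' : g'.left.toAdd ∈ LambdaRplus n)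
    (hconj : IsConj g g') :
    g'.left = g.left ∧
      ∃ p : Equiv.Perm (Fin n),
        g'.right = p * g.right * p⁻¹ ∧ phiR n p g.left = g.left := by
  obtain ⟨c, hc⟩ := isConj_iff.mp hconj
  have hc' : c * g = g' * c := by
    rw [← hc]; group
  set u := c.left with hu
  set s := c.right with hs
  set a := g.left with hA
  set k := g.right with hK
  set a' := g'.left with hA'
  set k' := g'.right with hK'
  have hright : s * k = k' * s := congrArg SemidirectProduct.right hc'
  have hleft : u * phiR n s a = a' * phiR n k' u := congrArg SemidirectProduct.left hc'
  -- d measures the failure of a' = s·a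
  set d : Multiplicative (LambdaR n) := a' / phiR n s a with hd
  have hd2 : d = u / phiR n k' u := by
    rw [hd, div_eq_div_iff_mul_eq_mul, mul_comm, hleft, mul_comm]
  -- k' fixes d
  have hfix : phiR n k' d = d := by
    have h1 : phiR n k' a' = a' := hg'
    have h2 : phiR n k' (phiR n s a) = phiR n s a := by
      have : phiR n k' * phiR n s = phiR n s * phiR n k := by
        rw [← map_mul, ← map_mul, hright]
      calc phiR n k' (phiR n s a) = (phiR n k' * phiR n s) a := rfl
        _ = (phiR n s * phiR n k) a := by rw [this]
        _ = phiR n s (phiR n k a) := rfl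
        _ = phiR n s a := by rw [hg]
    rw [hd, map_div, h1, h2]
  have hfixpow : ∀ j : ℕ, phiR n (k' ^ j) d = d := by
    intro j
    induction j with
    | zero => simp
    | succ j ih =>
      rw [pow_succ, map_mul]
      calc (phiR n (k' ^ j) * phiR n k') d = phiR n (k' ^ j) (phiR n k' d) := rfl
        _ = d := by rw [hfix, ih]
  -- telescoping product: d ^ orderOf k' = 1
  set m := orderOf k' with hm
  have hmpos : 0 < m := orderOf_pos k'
  have htel : d ^ m = 1 := by
    have e1 : ∀ j : ℕ, phiR n (k' ^ j) u / phiR n (k' ^ (j + 1)) u = d := by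
      intro j
      have : phiR n (k' ^ (j + 1)) u = phiR n (k' ^ j) (phiR n k' u) := by
        rw [pow_succ, map_mul]; rfl
      rw [this, ← map_div, ← hd2, hfixpow j]
    have e2 : ∏ j ∈ Finset.range m, (phiR n (k' ^ j) u / phiR n (k' ^ (j + 1)) u)
        = phiR n (k' ^ 0) u / phiR n (k' ^ m) u :=
      Finset.prod_range_div' (fun j => phiR n (k' ^ j) u) m
    have e3 : ∏ j ∈ Finset.range m, (phiR n (k' ^ j) u / phiR n (k' ^ (j + 1)) u) = d ^ m := by
      rw [Finset.prod_congr rfl (fun j _ => e1 j), Finset.prod_const, Finset.card_range]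
    rw [← e3, e2, pow_zero, pow_orderOf_eq_one, map_one, div_self']
  -- hence d = 1 (real vector space is torsion-free)
  have hd1 : d = 1 := by
    have h0 : (m : ℝ) • d.toAdd = 0 := by
      have := congrArg Multiplicative.toAdd htel
      rw [toAdd_pow] at this
      rw [Nat.cast_smul_eq_nsmul]
      exact this
    have : d.toAdd = 0 := by
      rcases smul_eq_zero.mp h0 with h | h
      · exact absurd (Nat.cast_eq_zero.mp h) hmpos.ne'
      · exact h
    exact this
  have hsa : a' = phiR n s a := by
    have := div_eq_one.mp hd1
    exact this
  -- a' = a via antitone lifts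
  obtain ⟨x, hxanti, hxmk⟩ := ha
  obtain ⟨y, hyanti, hymk⟩ := ha'
  have haa : a' = a := by
    have hq : (Submodule.Quotient.mk y : LambdaR n)
        = Submodule.Quotient.mk (fun i => x (s.symm i)) := by
      rw [hymk]
      have : a'.toAdd = permQR n s a.toAdd := congrArg Multiplicative.toAdd hsa
      rw [this, ← hxmk, permQR_mk]
    rw [Submodule.Quotient.eq] at hq
    rw [diagR, Submodule.mem_span_singleton] at hq
    obtain ⟨cc, hcc⟩ := hq
    set x' : Fin n → ℝ := fun i => x i + cc with hx'
    have hyx' : y = x' ∘ (s.symm : Equiv.Perm (Fin n)) := by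
      funext i
      have := congrFun hcc i
      simp only [Pi.smul_apply, Pi.sub_apply, smul_eq_mul, mul_one] at this
      simp only [hx', Function.comp_apply]
      linarith
    have hx'anti : Antitone x' := fun i j hij => by
      simp only [hx']
      exact add_le_add_left (hxanti hij) cc
    have : x' ∘ (s.symm : Equiv.Perm (Fin n)) = x' := by
      apply antitone_unique _ hx'anti
      rw [← hyx']; exact hyanti
    have hyeq : y = x' := by rw [hyx', this]
    have : a'.toAdd = a.toAdd := by
      rw [← hymk, ← hxmk, hyeq]
      rw [Submodule.Quotient.eq]
      rw [diagR, Submodule.mem_span_singleton]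
      exact ⟨cc, by funext i; simp [hx']⟩
    exact Multiplicative.toAdd.injective this
  refine ⟨haa, s, ?_, ?_⟩
  · exact eq_mul_inv_iff_mul_eq.mpr hright.symm
  · rw [← hsa, haa]
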